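/- Let Y be a simple graph on vertex set {1,…,n}, let α be an acyclic orientation of the complement of Y, let σ be a linear extension of the poset P_α, and let H_α denote the connected component of FS(Path_n, Y) containing σ. Then the diameter of H_α is at most C(n,2) − p_α, where p_α is the number of ordered pairs (i,j) with 1 ≤ i < j ≤ n such that i and j are comparable in P_α. -/

import Mathlib

open SimpleGraph

/-- Adjacency in the friends-and-strangers graph: bijections `σ` and `τ` are adjacent iff there
is an edge `{a, b}` of `X` such that `{σ a, σ b}` is an edge of `Y`, `σ a = τ b`, `σ b = τ a`,
and `σ c = τ c` for every vertex `c` other than `a` and `b`. -/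
def fsAdj {α β : Type*} (X : SimpleGraph α) (Y : SimpleGraph β) (σ τ : α ≃ β) : Prop :=
  ∃ a b : α, X.Adj a b ∧ Y.Adj (σ a) (σ b) ∧ σ a = τ b ∧ σ b = τ a ∧
    ∀ c : α, c ≠ a → c ≠ b → σ c = τ c

/-- The friends-and-strangers graph `FS(X, Y)` of two simple graphs on the same number of
vertices; its vertices are bijections from `V(X)` to `V(Y)`. -/
def FS {α β : Type*} (X : SimpleGraph α) (Y : SimpleGraph β) : SimpleGraph (α ≃ β) where
  Adj := fsAdj X Y
  symm := by
    constructor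
    rintro σ τ ⟨a, b, hX, hY, h1, h2, h3⟩
    refine ⟨a, b, hX, ?_, h2.symm, h1.symm, fun c hca hcb => (h3 c hca hcb).symm⟩
    rw [← h2, ← h1]
    exact hY.symm
  loopless := by
    constructor
    rintro σ ⟨a, b, hX, hY, h1, _, _⟩
    exact hX.ne (σ.injective h1)

/-- An acyclic orientation of a simple graph `G`: a choice of direction `toRel` for every edge
of `G` with no directed cycles. -/
structure AcyclicOrientation {V : Type*} (G : SimpleGraph V) where
  toRel : V → V → Prop
  adj_of_rel : ∀ a b, toRel a b → G.Adj a b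
  rel_total : ∀ a b, G.Adj a b → toRel a b ∨ toRel b a
  asymm : ∀ a b, toRel a b → ¬ toRel b a
  acyclic : ∀ v, ¬ Relation.TransGen toRel v v

/-- `v` is a source: it has no incoming edges (isolated vertices are permitted). -/
def AcyclicOrientation.IsSource {V : Type*} {G : SimpleGraph V}
    (α : AcyclicOrientation G) (v : V) : Prop :=
  ∀ u, ¬ α.toRel u v

/-- `v` is a sink: it has no outgoing edges (isolated vertices are permitted). -/
def AcyclicOrientation.IsSink {V : Type*} {G : SimpleGraph V}
    (α : AcyclicOrientation G) (v : V) : Prop :=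
  ∀ u, ¬ α.toRel v u

namespace FSProofAux

lemma swap_lt {n : ℕ} {a b x y : Fin n} (hab : (a : ℕ) + 1 = (b : ℕ)) (hxy : x < y)
    (hne : ¬(x = a ∧ y = b)) : Equiv.swap a b x < Equiv.swap a b y := by
  have h1 : ¬((x : ℕ) = a ∧ (y : ℕ) = b) := by
    intro ⟨u, v⟩; exact hne ⟨Fin.ext u, Fin.ext v⟩
  have hy := y.isLt
  simp only [Equiv.swap_apply_def]
  split_ifs <;> simp only [Fin.lt_def, Fin.ext_iff] at * <;> omega

lemma swap_lt_iff {n : ℕ} {a b x y : Fin n} (hab : (a : ℕ) + 1 = (b : ℕ))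
    (h1 : ¬(x = a ∧ y = b)) (h2 : ¬(x = b ∧ y = a)) :
    Equiv.swap a b x < Equiv.swap a b y ↔ x < y := by
  constructor
  · intro h
    rcases lt_trichotomy x y with h' | rfl | h'
    · exact h'
    · exact absurd h (lt_irrefl _)
    · exact absurd (swap_lt hab h' (fun ⟨hy, hx⟩ => h2 ⟨hx, hy⟩)) (lt_asymm h)
  · exact fun h => swap_lt hab h h1

variable {n : ℕ} {Y : SimpleGraph (Fin n)}

/-- `τ` respects the orientation `A`: endpoints of every `Yᶜ`-edge appear in the order
prescribed by `A`. -/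
def Pres (A : AcyclicOrientation Yᶜ) (τ : Fin n ≃ Fin n) : Prop :=
  ∀ u v, A.toRel u v → τ.symm u < τ.symm v

lemma pres_step {A : AcyclicOrientation Yᶜ} {τ τ' : Fin n ≃ Fin n}
    (h : (FS (pathGraph n) Y).Adj τ τ') (hP : Pres A τ) : Pres A τ' := by
  obtain ⟨a, b, hpath, hY, e1, e2, e3⟩ := h
  have hτ' : ∀ c, τ' c = τ (Equiv.swap a b c) := by
    intro c
    rcases eq_or_ne c a with rfl | ha
    · rw [Equiv.swap_apply_left]; exact e2.symm
    rcases eq_or_ne c b with rfl | hb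
    · rw [Equiv.swap_apply_right]; exact e1.symm
    · rw [Equiv.swap_apply_of_ne_of_ne ha hb]; exact (e3 c ha hb).symm
  have hsymm : ∀ v, τ'.symm v = Equiv.swap a b (τ.symm v) := by
    intro v
    apply τ'.injective
    rw [Equiv.apply_symm_apply, hτ', Equiv.swap_apply_self, Equiv.apply_symm_apply]
  intro u v huv
  have hlt := hP u v huv
  have hnadj : ¬ Y.Adj u v := ((Y.compl_adj u v).mp (A.adj_of_rel u v huv)).2
  rw [hsymm, hsymm]
  rcases SimpleGraph.pathGraph_adj.mp hpath with hab | hab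
  · apply swap_lt hab hlt
    rintro ⟨h1, h2⟩
    apply hnadj
    have hu : u = τ a := by rw [← h1, Equiv.apply_symm_apply]
    have hv : v = τ b := by rw [← h2, Equiv.apply_symm_apply]
    rw [hu, hv]; exact hY
  · rw [Equiv.swap_comm]
    apply swap_lt hab hlt
    rintro ⟨h1, h2⟩
    apply hnadj
    have hu : u = τ b := by rw [← h1, Equiv.apply_symm_apply]
    have hv : v = τ a := by rw [← h2, Equiv.apply_symm_apply]
    rw [hu, hv]; exact hY.symm

lemma pres_of_walk {A : AcyclicOrientation Yᶜ} :
    ∀ {σ τ : Fin n ≃ Fin n}, (FS (pathGraph n) Y).Walk σ τ → Pres A σ → Pres A τ := by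
  intro σ τ w
  induction w with
  | nil => exact id
  | cons h' p ih => exact fun hP => ih (pres_step h' hP)

lemma le_of_rtg {A : AcyclicOrientation Yᶜ} {τ : Fin n ≃ Fin n} (hP : Pres A τ)
    {i j : Fin n} (h : Relation.ReflTransGen A.toRel i j) : τ.symm i ≤ τ.symm j := by
  induction h with
  | refl => exact le_refl _
  | tail h1 h2 ih => exact ih.trans (hP _ _ h2).le

/-- `u` and `v` appear in different relative orders in `τ₁` and `τ₂`. -/
def Disag (τ₁ τ₂ : Fin n ≃ Fin n) (u v : Fin n) : Prop :=
  ¬(τ₁.symm u < τ₁.symm v ↔ τ₂.symm u < τ₂.symm v)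

lemma disag_symm {τ₁ τ₂ : Fin n ≃ Fin n} {u v : Fin n} (hne : u ≠ v)
    (h : Disag τ₁ τ₂ u v) : Disag τ₁ τ₂ v u := by
  have h1 : (τ₁.symm u : ℕ) ≠ (τ₁.symm v : ℕ) :=
    fun e => hne (τ₁.symm.injective (Fin.ext e))
  have h2 : (τ₂.symm u : ℕ) ≠ (τ₂.symm v : ℕ) :=
    fun e => hne (τ₂.symm.injective (Fin.ext e))
  simp only [Disag, Fin.lt_def] at h ⊢
  omega

lemma eq_of_no_disag {τ₁ τ₂ : Fin n ≃ Fin n}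
    (h : ∀ u v : Fin n, u < v → ¬ Disag τ₁ τ₂ u v) : τ₁ = τ₂ := by
  have key : ∀ u v : Fin n, (τ₁.symm u < τ₁.symm v ↔ τ₂.symm u < τ₂.symm v) := by
    intro u v
    rcases lt_trichotomy u v with h' | rfl | h'
    · exact of_not_not (h u v h')
    · simp
    · have h0 := of_not_not (h v u h')
      have h1 : (τ₁.symm u : ℕ) ≠ (τ₁.symm v : ℕ) :=
        fun e => h'.ne' (τ₁.symm.injective (Fin.ext e))
      have h2 : (τ₂.symm u : ℕ) ≠ (τ₂.symm v : ℕ) :=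
        fun e => h'.ne' (τ₂.symm.injective (Fin.ext e))
      simp only [Fin.lt_def] at h0 ⊢
      omega
  have hg : StrictMono (fun p => τ₂.symm (τ₁ p)) := by
    intro p q hpq
    exact (key (τ₁ p) (τ₁ q)).mp (by simpa using hpq)
  have hrange : Set.range (fun p => τ₂.symm (τ₁ p)) = Set.range (id : Fin n → Fin n) := by
    rw [Set.range_id]
    exact Set.range_eq_univ.mpr fun y => ⟨τ₁.symm (τ₂ y), by simp⟩
  haveI : WellFoundedLT (Fin n) := inferInstance
  have hid := (StrictMono.range_inj (β := Fin n) (γ := Fin n) hg strictMono_id).mp hrange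
  apply Equiv.ext
  intro p
  have hp := congrFun hid p
  simp only [id_eq] at hp
  exact τ₂.symm.injective (by simpa using hp)

lemma find_adj {τ₁ τ₂ : Fin n ≃ Fin n} :
    ∀ (d : ℕ) (p q : Fin n), (p : ℕ) + d = (q : ℕ) → Disag τ₁ τ₂ (τ₁ p) (τ₁ q) →
      ∃ k k' : Fin n, (k : ℕ) + 1 = (k' : ℕ) ∧ Disag τ₁ τ₂ (τ₁ k) (τ₁ k') := by
  intro d
  induction d with
  | zero =>
    intro p q hpq hd
    have : p = q := Fin.ext (by omega)
    subst this
    exact absurd hd (by simp [Disag])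
  | succ d ih =>
    intro p q hpq hd
    rcases Nat.eq_zero_or_pos d with rfl | hdpos
    · exact ⟨p, q, by omega, hd⟩
    · have hmlt : (p : ℕ) + 1 < n := by have := q.isLt; omega
      set m : Fin n := ⟨(p : ℕ) + 1, hmlt⟩ with hm
      by_cases hpm : Disag τ₁ τ₂ (τ₁ p) (τ₁ m)
      · exact ⟨p, m, rfl, hpm⟩
      · apply ih m q (by simp [hm]; omega)
        rw [Disag, not_iff] at hd hpm ⊢
        simp only [Equiv.symm_apply_apply] at hd hpm ⊢
        have hmv : (m : ℕ) = (p : ℕ) + 1 := rfl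
        simp only [Fin.lt_def] at hd hpm ⊢
        rw [not_iff] at hpm
        omega

open Classical in
/-- The set of pairs `u < v` on which `τ₁` and `τ₂` disagree. -/
noncomputable def Dset (τ₁ τ₂ : Fin n ≃ Fin n) : Finset (Fin n × Fin n) :=
  Finset.univ.filter fun p => p.1 < p.2 ∧ Disag τ₁ τ₂ p.1 p.2

lemma mem_Dset {τ₁ τ₂ : Fin n ≃ Fin n} {p : Fin n × Fin n} :
    p ∈ Dset τ₁ τ₂ ↔ p.1 < p.2 ∧ Disag τ₁ τ₂ p.1 p.2 := by
  classical
  simp [Dset]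

lemma step_lemma {A : AcyclicOrientation Yᶜ} {τ₁ τ₂ : Fin n ≃ Fin n}
    (hP1 : Pres A τ₁) (hP2 : Pres A τ₂) {k k' : Fin n} (hkk : (k : ℕ) + 1 = (k' : ℕ))
    (hd : Disag τ₁ τ₂ (τ₁ k) (τ₁ k')) :
    ∃ τ₁' : Fin n ≃ Fin n, (FS (pathGraph n) Y).Adj τ₁ τ₁' ∧
      (Dset τ₁' τ₂).card < (Dset τ₁ τ₂).card ∧ Pres A τ₁' := by
  set i := τ₁ k with hi
  set j := τ₁ k' with hj
  have hkk' : k ≠ k' := fun e => by rw [e] at hkk; omega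
  have hij : i ≠ j := fun e => hkk' (τ₁.injective e)
  have hYij : Y.Adj i j := by
    by_contra hY
    have hcadj : Yᶜ.Adj i j := (Y.compl_adj i j).mpr ⟨hij, hY⟩
    rcases A.rel_total i j hcadj with h' | h'
    · exact hd (iff_of_true (hP1 _ _ h') (hP2 _ _ h'))
    · exact hd (iff_of_false (lt_asymm (hP1 _ _ h')) (lt_asymm (hP2 _ _ h')))
  set τ₁' : Fin n ≃ Fin n := (Equiv.swap k k').trans τ₁ with hτ₁'
  have happ : ∀ c, τ₁' c = τ₁ (Equiv.swap k k' c) := fun c => rfl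
  have hsymm : ∀ v, τ₁'.symm v = Equiv.swap k k' (τ₁.symm v) := by
    intro v
    rw [hτ₁', Equiv.symm_trans_apply, Equiv.symm_swap]
  have hsi : τ₁.symm i = k := by rw [hi, Equiv.symm_apply_apply]
  have hsj : τ₁.symm j = k' := by rw [hj, Equiv.symm_apply_apply]
  have hsymm_i : τ₁'.symm i = k' := by
    rw [hsymm, hsi, Equiv.swap_apply_left]
  have hsymm_j : τ₁'.symm j = k := by
    rw [hsymm, hsj, Equiv.swap_apply_right]
  have hadj : (FS (pathGraph n) Y).Adj τ₁ τ₁' := by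
    refine ⟨k, k', SimpleGraph.pathGraph_adj.mpr (Or.inl hkk), hYij, ?_, ?_, ?_⟩
    · rw [happ, Equiv.swap_apply_right]
    · rw [happ, Equiv.swap_apply_left]
    · intro c hck hck'
      rw [happ, Equiv.swap_apply_of_ne_of_ne hck hck']
  have horder : ∀ u v : Fin n, ¬(u = i ∧ v = j) → ¬(u = j ∧ v = i) →
      (τ₁'.symm u < τ₁'.symm v ↔ τ₁.symm u < τ₁.symm v) := by
    intro u v h1 h2
    rw [hsymm, hsymm]
    apply swap_lt_iff hkk
    · rintro ⟨e1, e2⟩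
      rw [Equiv.symm_apply_eq] at e1 e2
      exact h1 ⟨e1.trans hi.symm, e2.trans hj.symm⟩
    · rintro ⟨e1, e2⟩
      rw [Equiv.symm_apply_eq] at e1 e2
      exact h2 ⟨e1.trans hj.symm, e2.trans hi.symm⟩
  have hsub : Dset τ₁' τ₂ ⊆ Dset τ₁ τ₂ := by
    intro p hp
    obtain ⟨hlt, hdis⟩ := mem_Dset.mp hp
    by_cases hc : (p.1 = i ∧ p.2 = j) ∨ (p.1 = j ∧ p.2 = i)
    · rcases hc with ⟨e1, e2⟩ | ⟨e1, e2⟩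
      · exact mem_Dset.mpr ⟨hlt, by rw [e1, e2]; exact hd⟩
      · exact mem_Dset.mpr ⟨hlt, by rw [e1, e2]; exact disag_symm hij hd⟩
    · have h1 : ¬(p.1 = i ∧ p.2 = j) := fun h => hc (Or.inl h)
      have h2 : ¬(p.1 = j ∧ p.2 = i) := fun h => hc (Or.inr h)
      exact mem_Dset.mpr ⟨hlt, fun hiff => hdis ((horder p.1 p.2 h1 h2).trans hiff)⟩
  have hklt : k < k' := by rw [Fin.lt_def]; omega
  have hnd : ¬ Disag τ₁' τ₂ i j := by
    intro hcon
    rw [Disag, hsymm_i, hsymm_j] at hcon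
    have h2f : ¬(τ₂.symm i < τ₂.symm j) :=
      fun ht => hd (iff_of_true (by rw [hsi, hsj]; exact hklt) ht)
    exact hcon (iff_of_false (lt_asymm hklt) h2f)
  have hndr : ¬ Disag τ₁' τ₂ j i := fun hcon => hnd (disag_symm hij.symm hcon)
  have hp0 : ∃ p0, p0 ∈ Dset τ₁ τ₂ ∧ p0 ∉ Dset τ₁' τ₂ := by
    rcases lt_or_gt_of_ne hij with hlt | hlt
    · exact ⟨(i, j), mem_Dset.mpr ⟨hlt, hd⟩, fun hmem => hnd (mem_Dset.mp hmem).2⟩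
    · exact ⟨(j, i), mem_Dset.mpr ⟨hlt, disag_symm hij hd⟩,
        fun hmem => hndr (mem_Dset.mp hmem).2⟩
  obtain ⟨p0, hp0a, hp0b⟩ := hp0
  exact ⟨τ₁', hadj,
    Finset.card_lt_card ((Finset.ssubset_iff_of_subset hsub).mpr ⟨p0, hp0a, hp0b⟩),
    pres_step hadj hP1⟩

end FSProofAux

namespace FSProofAux

variable {n : ℕ} {Y : SimpleGraph (Fin n)}

lemma walk_of_card {A : AcyclicOrientation Yᶜ} {τ₂ : Fin n ≃ Fin n} (hP2 : Pres A τ₂) :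
    ∀ (N : ℕ) (τ₁ : Fin n ≃ Fin n), Pres A τ₁ → (Dset τ₁ τ₂).card ≤ N →
      ∃ w : (FS (pathGraph n) Y).Walk τ₁ τ₂, w.length ≤ N := by
  intro N
  induction N with
  | zero =>
    intro τ₁ hP1 hcard
    have hD : Dset τ₁ τ₂ = ∅ := Finset.card_eq_zero.mp (Nat.le_zero.mp hcard)
    have hEq : τ₁ = τ₂ := by
      apply eq_of_no_disag
      intro u v huv hd
      have hmem : (u, v) ∈ Dset τ₁ τ₂ := mem_Dset.mpr ⟨huv, hd⟩
      rw [hD] at hmem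
      exact absurd hmem (Finset.notMem_empty _)
    subst hEq
    exact ⟨SimpleGraph.Walk.nil, by simp⟩
  | succ N ih =>
    intro τ₁ hP1 hcard
    by_cases heq : τ₁ = τ₂
    · subst heq
      exact ⟨SimpleGraph.Walk.nil, by simp⟩
    · have hne : ∃ u v : Fin n, u < v ∧ Disag τ₁ τ₂ u v := by
        by_contra hno
        push_neg at hno
        exact heq (eq_of_no_disag hno)
      obtain ⟨u, v, huv, hd⟩ := hne
      have hd' : Disag τ₁ τ₂ (τ₁ (τ₁.symm u)) (τ₁ (τ₁.symm v)) := by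
        rw [Equiv.apply_symm_apply, Equiv.apply_symm_apply]; exact hd
      have hpq : τ₁.symm u ≠ τ₁.symm v := fun e => huv.ne (τ₁.symm.injective e)
      obtain ⟨k, k', hkk, hdk⟩ :
          ∃ k k' : Fin n, (k : ℕ) + 1 = (k' : ℕ) ∧ Disag τ₁ τ₂ (τ₁ k) (τ₁ k') := by
        rcases lt_or_gt_of_ne hpq with h | h
        · refine find_adj ((τ₁.symm v : ℕ) - (τ₁.symm u : ℕ)) (τ₁.symm u) (τ₁.symm v) ?_ hd'
          rw [Fin.lt_def] at h; omega
        · refine find_adj ((τ₁.symm u : ℕ) - (τ₁.symm v : ℕ)) (τ₁.symm v) (τ₁.symm u) ?_ ?_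
          · have := Fin.lt_def.mp h; omega
          · apply disag_symm ?_ hd'
            intro e
            exact huv.ne (by rw [Equiv.apply_symm_apply, Equiv.apply_symm_apply] at e; exact e)
      obtain ⟨τ₁', hadj, hlt, hP1'⟩ := step_lemma hP1 hP2 hkk hdk
      obtain ⟨w, hw⟩ := ih τ₁' hP1' (by omega)
      exact ⟨SimpleGraph.Walk.cons hadj w, by simpa using Nat.succ_le_succ hw⟩

lemma card_pairs (n : ℕ) :
    (Finset.univ.filter fun p : Fin n × Fin n => p.1 < p.2).card = n.choose 2 := by
  rw [Finset.card_eq_sum_card_fiberwise (f := Prod.fst) (t := Finset.univ)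
    (fun x _ => Finset.mem_univ _)]
  have hfib : ∀ i : Fin n,
      ((Finset.univ.filter fun p : Fin n × Fin n => p.1 < p.2).filter
        fun p => p.1 = i).card = (Finset.Ioi i).card := by
    intro i
    refine Finset.card_bij' (fun p _ => p.2) (fun j _ => (i, j)) ?_ ?_ ?_ ?_
    · intro p hp
      simp only [Finset.mem_filter, Finset.mem_univ, true_and] at hp
      simp only [Finset.mem_Ioi]
      rw [← hp.2]; exact hp.1
    · intro j hj
      simp only [Finset.mem_Ioi] at hj
      simp only [Finset.mem_filter, Finset.mem_univ, true_and]
      exact ⟨hj, trivial⟩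
    · intro p hp
      simp only [Finset.mem_filter] at hp
      exact Prod.ext hp.2.symm rfl
    · intro j hj
      rfl
  rw [Finset.sum_congr rfl (fun i _ => hfib i)]
  simp only [Fin.card_Ioi]
  rw [Fin.sum_univ_eq_sum_range (fun k => n - 1 - k) n,
    Finset.sum_range_reflect (fun j => j) n, Finset.sum_range_id, Nat.choose_two_right]

end FSProofAux

/-- Let `Y` be a graph on `{1, …, n}`, `α` an acyclic orientation of `Yᶜ`,
and `σ` a linear extension of the poset `P_α`. Then the connected component of
`FS(Path_n, Y)` containing `σ` has diameter at most `C(n, 2) - p_α`, where `p_α` is the number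
of pairs `i < j` comparable in `P_α`. -/
theorem fs_path_component_diam_le (n : ℕ) (Y : SimpleGraph (Fin n))
    (α : AcyclicOrientation Yᶜ) (σ : Fin n ≃ Fin n)
    (hσ : ∀ i j : Fin n, Relation.ReflTransGen α.toRel i j → σ.symm i ≤ σ.symm j)
    (τ₁ τ₂ : Fin n ≃ Fin n)
    (h₁ : (FS (pathGraph n) Y).Reachable σ τ₁)
    (h₂ : (FS (pathGraph n) Y).Reachable σ τ₂) :
    (FS (pathGraph n) Y).dist τ₁ τ₂ ≤
      Nat.choose n 2 -
        {p : Fin n × Fin n | p.1 < p.2 ∧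
          (Relation.ReflTransGen α.toRel p.1 p.2 ∨
            Relation.ReflTransGen α.toRel p.2 p.1)}.ncard := by
  classical
  have hPσ : FSProofAux.Pres α σ := by
    intro u v h
    refine lt_of_le_of_ne (hσ u v (Relation.ReflTransGen.single h)) ?_
    intro e
    exact (α.adj_of_rel u v h).ne (σ.symm.injective e)
  obtain ⟨w1⟩ := h₁
  obtain ⟨w2⟩ := h₂
  have hP1 : FSProofAux.Pres α τ₁ := FSProofAux.pres_of_walk w1 hPσ
  have hP2 : FSProofAux.Pres α τ₂ := FSProofAux.pres_of_walk w2 hPσ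
  obtain ⟨w, hw⟩ := FSProofAux.walk_of_card hP2 (FSProofAux.Dset τ₁ τ₂).card τ₁ hP1 le_rfl
  have hdist : (FS (pathGraph n) Y).dist τ₁ τ₂ ≤ (FSProofAux.Dset τ₁ τ₂).card :=
    (SimpleGraph.dist_le w).trans hw
  set Afin := Finset.univ.filter fun p : Fin n × Fin n => p.1 < p.2 with hA
  set Cfin := Finset.univ.filter (fun p : Fin n × Fin n => p.1 < p.2 ∧
    (Relation.ReflTransGen α.toRel p.1 p.2 ∨ Relation.ReflTransGen α.toRel p.2 p.1)) with hC
  have hCn : {p : Fin n × Fin n | p.1 < p.2 ∧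
      (Relation.ReflTransGen α.toRel p.1 p.2 ∨
        Relation.ReflTransGen α.toRel p.2 p.1)}.ncard = Cfin.card := by
    rw [← Set.ncard_coe_finset Cfin]
    congr 1
    ext p
    simp [hC]
  have hCsub : Cfin ⊆ Afin := by
    intro p hp
    have h' := Finset.mem_filter.mp hp
    exact Finset.mem_filter.mpr ⟨h'.1, h'.2.1⟩
  have hDsub : FSProofAux.Dset τ₁ τ₂ ⊆ Afin \ Cfin := by
    intro p hp
    obtain ⟨hlt, hd⟩ := FSProofAux.mem_Dset.mp hp
    rw [Finset.mem_sdiff]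
    refine ⟨Finset.mem_filter.mpr ⟨Finset.mem_univ _, hlt⟩, fun hCmem => ?_⟩
    rcases (Finset.mem_filter.mp hCmem).2.2 with hr | hr
    · have l1 := FSProofAux.le_of_rtg hP1 hr
      have l2 := FSProofAux.le_of_rtg hP2 hr
      have ne1 : τ₁.symm p.1 ≠ τ₁.symm p.2 := fun e => hlt.ne (τ₁.symm.injective e)
      have ne2 : τ₂.symm p.1 ≠ τ₂.symm p.2 := fun e => hlt.ne (τ₂.symm.injective e)
      exact hd (iff_of_true (lt_of_le_of_ne l1 ne1) (lt_of_le_of_ne l2 ne2))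
    · have l1 := FSProofAux.le_of_rtg hP1 hr
      have l2 := FSProofAux.le_of_rtg hP2 hr
      exact hd (iff_of_false (not_lt.mpr l1) (not_lt.mpr l2))
  calc (FS (pathGraph n) Y).dist τ₁ τ₂ ≤ (FSProofAux.Dset τ₁ τ₂).card := hdist
    _ ≤ (Afin \ Cfin).card := Finset.card_le_card hDsub
    _ = Afin.card - Cfin.card := Finset.card_sdiff_of_subset hCsub
    _ = Nat.choose n 2 - _ := by rw [hA, FSProofAux.card_pairs n, hCn]
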